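/- Let S be a set of points in general position in the plane and let a, b ∈ S be distinct. Suppose that not both a and b are on the boundary of the convex hull of S, that one of s, t equals a or b, that the open halfplane determined by the line ℓ(ab) containing the other of s, t contains at least one more point of S, and that every segment between two points of S that crosses the line ℓ(ab) but not the segment ab is incident to the other of s, t. Then there is no plane Hamiltonian path on S with endpoints s and t that contains the segment ab as an edge. -/

import Mathlib

open Set
open scoped Classical

noncomputable section

/-- Points in the plane. -/
abbrev Pt : Type := ℝ × ℝ

/-- Orientation determinant of the triple `(a, b, p)`:
positive iff `p` lies strictly to the left of the directed line from `a` to `b`. -/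
def det3 (a b p : Pt) : ℝ :=
  (b.1 - a.1) * (p.2 - a.2) - (b.2 - a.2) * (p.1 - a.1)

/-- A finite point set is in general position if no three of its points are collinear. -/
def GenPos (S : Finset Pt) : Prop :=
  ∀ p ∈ S, ∀ q ∈ S, ∀ r ∈ S,
    p ≠ q → p ≠ r → q ≠ r → ¬ Collinear ℝ ({p, q, r} : Set Pt)

/-- The list of (directed) edges of a polygonal path given by its list of vertices. -/
def edgeList (l : List Pt) : List (Pt × Pt) := l.zip l.tail

/-- The segment `ab` is an edge of the path `l`, i.e. `a` and `b` are consecutive on `l`. -/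
def IsEdgeOf (a b : Pt) (l : List Pt) : Prop :=
  (a, b) ∈ edgeList l ∨ (b, a) ∈ edgeList l

/-- `l` is a plane (crossing-free) Hamiltonian path on the point set `S`:
its vertices are exactly the points of `S`, each visited once, and any two distinct
edges intersect only in common endpoints. -/
def PlanePath (S : Finset Pt) (l : List Pt) : Prop :=
  l.Nodup ∧ l.toFinset = S ∧
  ∀ e ∈ edgeList l, ∀ f ∈ edgeList l, e ≠ f →
    segment ℝ e.1 e.2 ∩ segment ℝ f.1 f.2 ⊆
      (({e.1, e.2} : Set Pt) ∩ ({f.1, f.2} : Set Pt))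

/-- Two paths are edge-disjoint: no segment is an edge of both. -/
def EdgeDisjoint (l₁ l₂ : List Pt) : Prop :=
  ∀ x y : Pt, IsEdgeOf x y l₁ → ¬ IsEdgeOf x y l₂

/-- `p` is a vertex of the boundary of the convex hull of `S`. -/
def HullVertex (S : Finset Pt) (p : Pt) : Prop :=
  p ∈ Set.extremePoints ℝ (convexHull ℝ (S : Set Pt))

/-- `ab` is an edge of the boundary of the convex hull of `S`, i.e. `a` and `b` are
consecutive hull vertices: all other points of `S` lie strictly on one side of line `ab`. -/
def IsHullEdge (S : Finset Pt) (a b : Pt) : Prop :=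
  a ∈ S ∧ b ∈ S ∧ a ≠ b ∧
  ((∀ p ∈ S, p ≠ a → p ≠ b → 0 < det3 a b p) ∨
   (∀ p ∈ S, p ≠ a → p ≠ b → det3 a b p < 0))

/-- The segment `xy` is a bridge over the line through `a` and `b`:
it crosses the line `ℓ(ab)` but not the segment `ab`. -/
def IsBridge (a b x y : Pt) : Prop :=
  det3 a b x * det3 a b y < 0 ∧ segment ℝ x y ∩ segment ℝ a b = ∅

/-- The set of common edges of the two paths is exactly the segment `ab`. -/
def SharesExactly (a b : Pt) (l₁ l₂ : List Pt) : Prop :=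
  IsEdgeOf a b l₁ ∧ IsEdgeOf a b l₂ ∧
  ∀ x y : Pt, IsEdgeOf x y l₁ → IsEdgeOf x y l₂ → ({x, y} : Set Pt) = ({a, b} : Set Pt)

lemma edgeList_cons_cons (c d : Pt) (m : List Pt) :
    edgeList (c :: d :: m) = (c, d) :: edgeList (d :: m) := rfl

lemma mem_edgeList_cons {x y c : Pt} {m : List Pt} (h : (x,y) ∈ edgeList m) :
    (x,y) ∈ edgeList (c::m) := by
  cases m with
  | nil => simp [edgeList] at h
  | cons d m' => rw [edgeList_cons_cons]; exact List.mem_cons_of_mem _ h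

lemma mem_edgeList_iff {x y : Pt} : ∀ {l : List Pt},
    (x,y) ∈ edgeList l ↔ ∃ u v, l = u ++ x :: y :: v
  | [] => by simp [edgeList]
  | [c] => by
      simp [edgeList]
      intro u v h
      apply_fun List.length at h; simp at h; omega
  | c :: d :: m => by
      constructor
      · intro h
        rw [edgeList_cons_cons] at h
        rcases List.mem_cons.1 h with h1 | h2
        · obtain ⟨rfl, rfl⟩ := Prod.mk.injEq x y c d ▸ h1
          exact ⟨[], m, rfl⟩
        · obtain ⟨u, v, huv⟩ := (mem_edgeList_iff (l := d::m)).1 h2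
          exact ⟨c :: u, v, by rw [List.cons_append, ← huv]⟩
      · rintro ⟨u, v, huv⟩
        cases u with
        | nil =>
          simp at huv
          obtain ⟨rfl, rfl, rfl⟩ := huv
          rw [edgeList_cons_cons]; exact List.mem_cons_self
        | cons e u' =>
          simp at huv
          obtain ⟨rfl, huv⟩ := huv
          exact mem_edgeList_cons ((mem_edgeList_iff (l := d::m)).2 ⟨u', v, huv⟩)

lemma mem_edgeList_reverse {x y : Pt} {l : List Pt} (h : (x,y) ∈ edgeList l) :
    (y,x) ∈ edgeList l.reverse := by
  obtain ⟨u,v,rfl⟩ := mem_edgeList_iff.1 h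
  exact mem_edgeList_iff.2 ⟨v.reverse, u.reverse, by simp⟩

lemma isEdgeOf_reverse {a b : Pt} {l : List Pt} (h : IsEdgeOf a b l) :
    IsEdgeOf a b l.reverse := by
  rcases h with h | h
  · exact Or.inr (mem_edgeList_reverse h)
  · exact Or.inl (mem_edgeList_reverse h)

lemma planePath_reverse {S : Finset Pt} {l : List Pt} (h : PlanePath S l) :
    PlanePath S l.reverse := by
  obtain ⟨h1, h2, h3⟩ := h
  refine ⟨List.nodup_reverse.2 h1, by rw [List.toFinset_reverse]; exact h2, ?_⟩
  rintro ⟨e1,e2⟩ he ⟨f1,f2⟩ hf hef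
  have he' : (e2,e1) ∈ edgeList l := by
    have := mem_edgeList_reverse he; rwa [List.reverse_reverse] at this
  have hf' : (f2,f1) ∈ edgeList l := by
    have := mem_edgeList_reverse hf; rwa [List.reverse_reverse] at this
  have hne : ((e2,e1) : Pt × Pt) ≠ (f2,f1) := by
    intro hc; apply hef
    rw [Prod.mk.injEq] at hc ⊢; exact ⟨hc.2, hc.1⟩
  have hsub := h3 _ he' _ hf' hne
  simp only at hsub ⊢
  rw [segment_symm ℝ e2 e1, segment_symm ℝ f2 f1, Set.pair_comm e2 e1,
    Set.pair_comm f2 f1] at hsub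
  exact hsub

lemma chain'_of_edges (P : Pt → Pt → Prop) : ∀ (l : List Pt),
    (∀ x y, (x,y) ∈ edgeList l → P x y) → l.Chain' P
  | [], _ => List.isChain_nil
  | [x], _ => List.isChain_singleton x
  | x :: y :: m, h => by
    unfold List.Chain'
    rw [List.isChain_cons_cons]
    refine ⟨h x y List.mem_cons_self, ?_⟩
    exact chain'_of_edges P (y::m) (fun u v huv => h u v (List.mem_cons_of_mem _ huv))

lemma sign_reach (f : Pt → ℝ) : ∀ (c : Pt) (m : List Pt),
    List.Chain' (fun x y => 0 < f x * f y) (c :: m) → ∀ x ∈ m, 0 < f c * f x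
  | _, [], _, x, hx => by simp at hx
  | c, d :: m', h, x, hx => by
    unfold List.Chain' at h
    rw [List.isChain_cons_cons] at h
    rcases List.mem_cons.1 hx with rfl | hx'
    · exact h.1
    · have h2 := sign_reach f d m' h.2 x hx'
      nlinarith [h.1, h2, sq_nonneg (f d), mul_pos h.1 h2]

lemma sign_pair (f : Pt → ℝ) : ∀ (m : List Pt),
    List.Chain' (fun x y => 0 < f x * f y) m →
    ∀ x ∈ m, ∀ y ∈ m, x ≠ y → 0 < f x * f y
  | [], _, x, hx, _, _, _ => by simp at hx
  | c :: m', h, x, hx, y, hy, hxy => by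
    rcases List.mem_cons.1 hx with rfl | hx' <;> rcases List.mem_cons.1 hy with rfl | hy'
    · exact absurd rfl hxy
    · exact sign_reach f x m' h y hy'
    · have := sign_reach f y m' h x hx'
      rw [mul_comm]; exact this
    · exact sign_pair f m' h.tail x hx' y hy' hxy

lemma edge_head_structure {l : List Pt} {a b : Pt} (hnd : l.Nodup)
    (hh : l.head? = some a) (he : IsEdgeOf a b l) : ∃ r, l = a :: b :: r := by
  cases l with
  | nil => simp at hh
  | cons c m =>
    simp at hh; subst hh
    rcases he with h | h
    · rcases mem_edgeList_iff.1 h with ⟨u, v, huv⟩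
      cases u with
      | nil =>
        simp at huv
        exact ⟨v, by rw [huv]⟩
      | cons d u' =>
        simp at huv
        obtain ⟨rfl, hm⟩ := huv
        exfalso
        have : c ∈ m := by rw [hm]; simp
        exact (List.nodup_cons.1 hnd).1 this
    · exfalso
      have : c ∈ m := (List.of_mem_zip h).2
      exact (List.nodup_cons.1 hnd).1 this

lemma collinear_of_det3 {a b x : Pt} (h : det3 a b x = 0) :
    Collinear ℝ ({a, b, x} : Set Pt) := by
  rcases eq_or_ne a b with rfl | hab
  · have : ({a, a, x} : Set Pt) = {a, x} := by simp
    rw [this]; exact collinear_pair ℝ a x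
  rw [collinear_iff_exists_forall_eq_smul_vadd]
  refine ⟨a, b - a, ?_⟩
  have key : ∀ r : ℝ, (r • (b-a) +ᵥ a : Pt) = (r * (b.1-a.1) + a.1, r * (b.2-a.2) + a.2) := by
    intro r
    apply Prod.ext <;> simp [Prod.smul_fst, Prod.smul_snd, smul_eq_mul] <;> ring
  intro p hp
  rcases hp with rfl | rfl | rfl
  · exact ⟨0, by rw [key]; apply Prod.ext <;> simp⟩
  · exact ⟨1, by rw [key]; apply Prod.ext <;> simp⟩
  · have hd : (b.1-a.1) * (p.2-a.2) = (b.2-a.2) * (p.1-a.1) := by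
      simp only [det3] at h; linarith
    have hba : b.1 - a.1 ≠ 0 ∨ b.2 - a.2 ≠ 0 := by
      by_contra hc
      push_neg at hc
      exact hab (Prod.ext (by linarith [hc.1]) (by linarith [hc.2])).symm
    rcases hba with h1 | h2
    · refine ⟨(p.1 - a.1)/(b.1-a.1), ?_⟩
      rw [key]
      apply Prod.ext
      · simp only []; field_simp; ring
      · simp only []; field_simp; linear_combination hd
    · refine ⟨(p.2 - a.2)/(b.2-a.2), ?_⟩
      rw [key]
      apply Prod.ext
      · simp only []; field_simp; linear_combination -hd
      · simp only []; field_simp; ring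

lemma segment_endpoint_extreme {a b x y : Pt} (hab : a ≠ b)
    (hx : x ∈ segment ℝ a b) (hy : y ∈ segment ℝ a b)
    (h : a ∈ openSegment ℝ x y) : x = a ∧ y = a := by
  obtain ⟨u₁, u₂, hu₁, hu₂, hu, hxe⟩ := hx
  obtain ⟨v₁, v₂, hv₁, hv₂, hv, hye⟩ := hy
  obtain ⟨θ₁, θ₂, hθ₁, hθ₂, hθ, hae⟩ := h
  have h1 : ((θ₁*u₁ + θ₂*v₁) : ℝ) • a + (θ₁*u₂ + θ₂*v₂) • b = a := by
    have : ((θ₁*u₁ + θ₂*v₁) : ℝ) • a + (θ₁*u₂ + θ₂*v₂) • b = θ₁ • x + θ₂ • y := by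
      rw [← hxe, ← hye]; module
    rw [this, hae]
  have h2 : (θ₁*u₁ + θ₂*v₁ : ℝ) = 1 - (θ₁*u₂ + θ₂*v₂) := by linear_combination θ₁*hu + θ₂*hv + hθ
  rw [h2] at h1
  have h3 : (θ₁*u₂+θ₂*v₂) • (b - a) =
      ((1 - (θ₁*u₂+θ₂*v₂)) • a + (θ₁*u₂+θ₂*v₂) • b) - a := by module
  rw [h1, sub_self] at h3
  rcases smul_eq_zero.1 h3 with hc | hba
  · have hc1 : θ₁ * u₂ = 0 := by nlinarith [mul_nonneg hθ₁.le hu₂, mul_nonneg hθ₂.le hv₂]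
    have hc2 : θ₂ * v₂ = 0 := by nlinarith [mul_nonneg hθ₁.le hu₂, mul_nonneg hθ₂.le hv₂]
    have hu₂0 : u₂ = 0 := by
      rcases mul_eq_zero.1 hc1 with h | h
      · exact absurd h (ne_of_gt hθ₁)
      · exact h
    have hv₂0 : v₂ = 0 := by
      rcases mul_eq_zero.1 hc2 with h | h
      · exact absurd h (ne_of_gt hθ₂)
      · exact h
    have hu₁1 : u₁ = 1 := by linarith
    have hv₁1 : v₁ = 1 := by linarith
    constructor
    · rw [← hxe, hu₁1, hu₂0]; simp
    · rw [← hye, hv₁1, hv₂0]; simp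
  · exact absurd (sub_eq_zero.1 hba).symm hab

lemma face_segment (S : Finset Pt) (a b : Pt) (ha : a ∈ S) (hb : b ∈ S) (hab : a ≠ b)
    (c₀ c₁ c₂ : ℝ) (hnn : ∀ z ∈ S, 0 ≤ c₀ + c₁ * z.1 + c₂ * z.2)
    (hzero : ∀ z ∈ S, c₀ + c₁ * z.1 + c₂ * z.2 = 0 → z = a ∨ z = b)
    (x : Pt) (hx : x ∈ convexHull ℝ (S : Set Pt))
    (hgx : c₀ + c₁ * x.1 + c₂ * x.2 = 0) :
    x ∈ segment ℝ a b := by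
  classical
  rw [Finset.convexHull_eq] at hx
  obtain ⟨w, hw0, hw1, hwx⟩ := hx
  rw [Finset.centerMass_eq_of_sum_1 _ _ hw1] at hwx
  simp only [id] at hwx
  have hx1 : x.1 = ∑ y ∈ S, w y * y.1 := by
    rw [← hwx, Prod.fst_sum]
    exact Finset.sum_congr rfl fun y _ => by simp [Prod.smul_fst, smul_eq_mul]
  have hx2 : x.2 = ∑ y ∈ S, w y * y.2 := by
    rw [← hwx, Prod.snd_sum]
    exact Finset.sum_congr rfl fun y _ => by simp [Prod.smul_snd, smul_eq_mul]
  have hsum : ∑ y ∈ S, w y * (c₀ + c₁ * y.1 + c₂ * y.2) = 0 := by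
    have expand : ∑ y ∈ S, w y * (c₀ + c₁*y.1 + c₂*y.2) =
        c₀ * (∑ y ∈ S, w y) + c₁ * (∑ y ∈ S, w y * y.1) + c₂ * (∑ y ∈ S, w y * y.2) := by
      rw [Finset.mul_sum, Finset.mul_sum, Finset.mul_sum, ← Finset.sum_add_distrib,
        ← Finset.sum_add_distrib]
      exact Finset.sum_congr rfl fun y _ => by ring
    rw [expand, hw1, ← hx1, ← hx2]
    linear_combination hgx
  have hzw : ∀ y ∈ S, w y * (c₀ + c₁*y.1 + c₂*y.2) = 0 :=
    (Finset.sum_eq_zero_iff_of_nonneg (fun y hy => mul_nonneg (hw0 y hy) (hnn y hy))).1 hsum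
  have hsupp : ∀ y ∈ S, y ≠ a → y ≠ b → w y = 0 := by
    intro y hy hya hyb
    rcases mul_eq_zero.1 (hzw y hy) with h | h
    · exact h
    · rcases hzero y hy h with rfl | rfl
      · exact absurd rfl hya
      · exact absurd rfl hyb
  have habS : ({a, b} : Finset Pt) ⊆ S := by
    intro z hz
    rcases Finset.mem_insert.1 hz with rfl | hz
    · exact ha
    · rw [Finset.mem_singleton.1 hz]; exact hb
  have hvanish : ∀ z ∈ S, z ∉ ({a,b} : Finset Pt) → w z = 0 := by
    intro z hzS hz
    simp only [Finset.mem_insert, Finset.mem_singleton] at hz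
    push_neg at hz
    exact hsupp z hzS hz.1 hz.2
  have e1 : w a • a + w b • b = x := by
    calc w a • a + w b • b = ∑ y ∈ ({a,b} : Finset Pt), w y • y := (Finset.sum_pair (f := fun y => w y • y) hab).symm
    _ = ∑ y ∈ S, w y • y := Finset.sum_subset habS (fun z hzS hz => by
        rw [hvanish z hzS hz, zero_smul])
    _ = x := hwx
  have e2 : w a + w b = 1 := by
    calc w a + w b = ∑ y ∈ ({a,b} : Finset Pt), w y := (Finset.sum_pair (f := w) hab).symm
    _ = ∑ y ∈ S, w y := Finset.sum_subset habS (fun z hzS hz => hvanish z hzS hz)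
    _ = 1 := hw1
  exact ⟨w a, w b, hw0 a ha, hw0 b hb, e2, e1⟩

lemma hull_vertex_aux (S : Finset Pt) (a b : Pt) (ha : a ∈ S) (hb : b ∈ S) (hab : a ≠ b)
    (c₀ c₁ c₂ : ℝ) (hnn : ∀ z ∈ S, 0 ≤ c₀ + c₁ * z.1 + c₂ * z.2)
    (hzero : ∀ z ∈ S, c₀ + c₁ * z.1 + c₂ * z.2 = 0 → z = a ∨ z = b)
    (hga : c₀ + c₁ * a.1 + c₂ * a.2 = 0) : HullVertex S a := by
  have hconvnn : ∀ z ∈ convexHull ℝ (S : Set Pt), 0 ≤ c₀ + c₁ * z.1 + c₂ * z.2 := by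
    intro z hz
    have hsub : convexHull ℝ (S : Set Pt) ⊆ {z : Pt | 0 ≤ c₀ + c₁ * z.1 + c₂ * z.2} := by
      apply convexHull_min
      · intro w hw; exact hnn w hw
      · intro u hu v hv θ₁ θ₂ h1 h2 h12
        simp only [Set.mem_setOf_eq] at hu hv ⊢
        have e : c₀ + c₁*(θ₁ • u + θ₂ • v).1 + c₂*(θ₁ • u + θ₂ • v).2 =
            θ₁*(c₀ + c₁*u.1 + c₂*u.2) + θ₂*(c₀+c₁*v.1+c₂*v.2) := by
          simp only [Prod.fst_add, Prod.snd_add, Prod.smul_fst, Prod.smul_snd, smul_eq_mul]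
          linear_combination (-c₀) * h12
        rw [e]
        exact add_nonneg (mul_nonneg h1 hu) (mul_nonneg h2 hv)
    exact hsub hz
  rw [HullVertex, mem_extremePoints]
  refine ⟨subset_convexHull ℝ _ (by exact_mod_cast ha), ?_⟩
  intro x hx y hy hxy
  obtain ⟨θ₁, θ₂, hθ₁, hθ₂, hθ, hae⟩ := hxy
  have ea : c₀ + c₁*a.1 + c₂*a.2 =
      θ₁*(c₀+c₁*x.1+c₂*x.2) + θ₂*(c₀+c₁*y.1+c₂*y.2) := by
    rw [← hae]
    simp only [Prod.fst_add, Prod.snd_add, Prod.smul_fst, Prod.smul_snd, smul_eq_mul]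
    linear_combination (-c₀) * hθ
  have hX := hconvnn x hx
  have hY := hconvnn y hy
  have hx0 : c₀+c₁*x.1+c₂*x.2 = 0 := by
    apply le_antisymm _ hX
    nlinarith [mul_nonneg hθ₂.le hY]
  have hy0 : c₀+c₁*y.1+c₂*y.2 = 0 := by
    apply le_antisymm _ hY
    nlinarith [mul_nonneg hθ₁.le hX]
  have hxs := face_segment S a b ha hb hab c₀ c₁ c₂ hnn hzero x hx hx0
  have hys := face_segment S a b ha hb hab c₀ c₁ c₂ hnn hzero y hy hy0
  have := segment_endpoint_extreme hab hxs hys ⟨θ₁, θ₂, hθ₁, hθ₂, hθ, hae⟩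
  exact this


lemma det3_swap (a b x : Pt) : det3 b a x = - det3 a b x := by
  simp only [det3]; ring

lemma det3_self1 (a b : Pt) : det3 a b a = 0 := by simp only [det3]; ring
lemma det3_self2 (a b : Pt) : det3 a b b = 0 := by simp only [det3]; ring

lemma main_lemma (S : Finset Pt) (hgp : GenPos S) (a b t : Pt)
    (ha : a ∈ S) (hb : b ∈ S) (hab : a ≠ b) (ht : t ∈ S)
    (hnothull : ¬ (HullVertex S a ∧ HullVertex S b))
    (hp : ∃ p ∈ S, p ≠ t ∧ 0 < det3 a b p * det3 a b t)
    (hbr : ∀ x ∈ S, ∀ y ∈ S, IsBridge a b x y → x = t ∨ y = t)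
    (l : List Pt) (hpp : PlanePath S l) (hh : l.head? = some a)
    (hl : l.getLast? = some t) (he : IsEdgeOf a b l) : False := by
  obtain ⟨hnd, hSl, hplane⟩ := hpp
  obtain ⟨p, hpS, hpt, hpdet⟩ := hp
  have hft : det3 a b t ≠ 0 := by
    intro h; rw [h, mul_zero] at hpdet; exact lt_irrefl _ hpdet
  have hfne : ∀ x ∈ S, x ≠ a → x ≠ b → det3 a b x ≠ 0 := by
    intro x hx hxa hxb h
    exact hgp a ha b hb x hx hab (Ne.symm hxa) (Ne.symm hxb) (collinear_of_det3 h)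
  -- existence of a point on the opposite side of t
  have hq : ∃ q ∈ S, det3 a b q * det3 a b t < 0 := by
    by_contra hcon
    push_neg at hcon
    apply hnothull
    set c₀ : ℝ := det3 a b t * ((b.2-a.2)*a.1 - (b.1-a.1)*a.2) with hc₀
    set c₁ : ℝ := det3 a b t * (-(b.2-a.2)) with hc₁
    set c₂ : ℝ := det3 a b t * (b.1-a.1) with hc₂
    have hgeq : ∀ z : Pt, c₀ + c₁ * z.1 + c₂ * z.2 = det3 a b t * det3 a b z := by
      intro z; rw [hc₀, hc₁, hc₂]; simp only [det3]; ring
    have hnn : ∀ z ∈ S, 0 ≤ c₀ + c₁ * z.1 + c₂ * z.2 := by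
      intro z hz; rw [hgeq, mul_comm]; exact hcon z hz
    have hzero : ∀ z ∈ S, c₀ + c₁ * z.1 + c₂ * z.2 = 0 → z = a ∨ z = b := by
      intro z hz h
      rw [hgeq] at h
      by_contra hc
      push_neg at hc
      exact hfne z hz hc.1 hc.2 ((mul_eq_zero.1 h).resolve_left hft)
    constructor
    · exact hull_vertex_aux S a b ha hb hab c₀ c₁ c₂ hnn hzero
        (by rw [hgeq, det3_self1, mul_zero])
    · exact hull_vertex_aux S b a hb ha hab.symm c₀ c₁ c₂ hnn
        (fun z hz h => (hzero z hz h).symm)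
        (by rw [hgeq, det3_self2, mul_zero])
  obtain ⟨q, hqS, hqdet⟩ := hq
  -- structure of the path
  have hta : t ≠ a := by intro h; rw [h, det3_self1] at hft; exact hft rfl
  have htb : t ≠ b := by intro h; rw [h, det3_self2] at hft; exact hft rfl
  obtain ⟨r, rfl⟩ := edge_head_structure hnd hh he
  rcases List.eq_nil_or_concat r with rfl | ⟨r', t', rfl⟩
  · simp at hl
    exact htb hl.symm
  rw [List.concat_eq_append] at *
  have hlform : a :: b :: (r' ++ [t']) = (a :: b :: r') ++ [t'] := by simp
  rw [hlform, List.getLast?_concat] at hl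
  obtain rfl : t' = t := by injection hl
  -- nodup facts
  have hna : a ∉ b :: (r' ++ [t']) := (List.nodup_cons.1 hnd).1
  have hndtail := (List.nodup_cons.1 hnd).2
  have hnb : b ∉ r' ++ [t'] := (List.nodup_cons.1 hndtail).1
  have hndr : (r' ++ [t']).Nodup := (List.nodup_cons.1 hndtail).2
  have hntr' : t' ∉ r' := by
    rw [List.nodup_append] at hndr
    intro hcon
    exact hndr.2.2 t' hcon t' (List.mem_singleton_self t') rfl
  have hnar' : a ∉ r' := fun hc => hna (by simp [hc])
  have hnbr' : b ∉ r' := fun hc => hnb (by simp [hc])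
  -- membership
  have hmem : ∀ x : Pt, x ∈ S ↔ (x = a ∨ x = b ∨ x ∈ r' ∨ x = t') := by
    intro x
    rw [← hSl]
    simp [List.mem_toFinset, List.mem_cons, List.mem_append]
    tauto
  -- p and q are in r'
  have hmemr' : ∀ x ∈ S, det3 a b x ≠ 0 → x ≠ t' → x ∈ r' := by
    intro x hx hfx hxt
    rcases (hmem x).1 hx with h | h | hxr | h
    · exact absurd (h ▸ det3_self1 a b) hfx
    · exact absurd (h ▸ det3_self2 a b) hfx
    · exact hxr
    · exact absurd h hxt
  have hfp : det3 a b p ≠ 0 := fun h => by rw [h, zero_mul] at hpdet; exact lt_irrefl _ hpdet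
  have hfq : det3 a b q ≠ 0 := fun h => by rw [h, zero_mul] at hqdet; exact lt_irrefl _ hqdet
  have hqt : q ≠ t' := by
    intro h; rw [h] at hqdet
    nlinarith [sq_nonneg (det3 a b t')]
  have hpr' : p ∈ r' := hmemr' p hpS hfp hpt
  have hqr' : q ∈ r' := hmemr' q hqS hfq hqt
  have hpq : p ≠ q := by
    intro h; rw [h] at hpdet
    nlinarith
  -- edges within r' preserve side
  have habl : (a,b) ∈ edgeList (a :: b :: (r' ++ [t'])) :=
    mem_edgeList_iff.2 ⟨[], r' ++ [t'], rfl⟩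
  have hedge_l : ∀ x y : Pt, (x,y) ∈ edgeList r' → 0 < det3 a b x * det3 a b y := by
    intro x y hxy
    obtain ⟨u, v, huv⟩ := mem_edgeList_iff.1 hxy
    have hxr : x ∈ r' := by rw [huv]; simp
    have hyr : y ∈ r' := by rw [huv]; simp
    have hxl : (x,y) ∈ edgeList (a :: b :: (r' ++ [t'])) :=
      mem_edgeList_iff.2 ⟨a :: b :: u, v ++ [t'], by simp [huv]⟩
    have hxa : x ≠ a := fun h => hnar' (h ▸ hxr)
    have hxb : x ≠ b := fun h => hnbr' (h ▸ hxr)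
    have hya : y ≠ a := fun h => hnar' (h ▸ hyr)
    have hyb : y ≠ b := fun h => hnbr' (h ▸ hyr)
    have hxS : x ∈ S := (hmem x).2 (Or.inr (Or.inr (Or.inl hxr)))
    have hyS : y ∈ S := (hmem y).2 (Or.inr (Or.inr (Or.inl hyr)))
    have hfx : det3 a b x ≠ 0 := hfne x hxS hxa hxb
    have hfy : det3 a b y ≠ 0 := hfne y hyS hya hyb
    rcases lt_or_gt_of_ne (mul_ne_zero hfx hfy) with hlt | hgt
    · exfalso
      have hempty : segment ℝ x y ∩ segment ℝ a b = ∅ := by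
        rw [Set.eq_empty_iff_forall_notMem]
        intro z hz
        have hne : ((x,y) : Pt × Pt) ≠ (a,b) := fun hc => hxa (congrArg Prod.fst hc)
        have h2 := hplane (x,y) hxl (a,b) habl hne hz
        simp only [Set.mem_inter_iff, Set.mem_insert_iff, Set.mem_singleton_iff] at h2
        obtain ⟨h3, h4⟩ := h2
        rcases h3 with rfl | rfl
        · rcases h4 with h | h
          · exact hxa h
          · exact hxb h
        · rcases h4 with h | h
          · exact hya h
          · exact hyb h
      rcases hbr x hxS y hyS ⟨hlt, hempty⟩ with rfl | rfl
      · exact hntr' hxr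
      · exact hntr' hyr
    · exact hgt
  have hchain : List.Chain' (fun x y => 0 < det3 a b x * det3 a b y) r' :=
    chain'_of_edges _ r' hedge_l
  have hpqpos := sign_pair (det3 a b) r' hchain p hpr' q hqr' hpq
  nlinarith [mul_pos hpqpos (mul_self_pos.2 hft)]

lemma bridge_swap {a b x y : Pt} (h : IsBridge b a x y) : IsBridge a b x y := by
  obtain ⟨h1, h2⟩ := h
  rw [det3_swap a b x, det3_swap a b y, neg_mul_neg] at h1
  rw [segment_symm ℝ b a] at h2
  exact ⟨h1, h2⟩


/-- Suppose not both `a, b` are hull vertices, one of `s, t` equals `a` or `b`,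
the open halfplane of `ℓ(ab)` containing the other of `s, t` contains at least one more
point of `S`, and every bridge over `ℓ(ab)` between points of `S` is incident to the other
of `s, t`. Then there is no plane Hamiltonian path with endpoints `s, t` containing `ab`. -/
theorem stmt_5 (S : Finset Pt) (hgp : GenPos S)
    (a b s t : Pt) (ha : a ∈ S) (hb : b ∈ S) (hab : a ≠ b)
    (hs : s ∈ S) (ht : t ∈ S)
    (hnothull : ¬ (HullVertex S a ∧ HullVertex S b))
    (hcase :
      (s ∈ ({a, b} : Set Pt) ∧
        (∃ p ∈ S, p ≠ t ∧ 0 < det3 a b p * det3 a b t) ∧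
        (∀ x ∈ S, ∀ y ∈ S, IsBridge a b x y → x = t ∨ y = t)) ∨
      (t ∈ ({a, b} : Set Pt) ∧
        (∃ p ∈ S, p ≠ s ∧ 0 < det3 a b p * det3 a b s) ∧
        (∀ x ∈ S, ∀ y ∈ S, IsBridge a b x y → x = s ∨ y = s))) :
    ¬ ∃ l : List Pt, PlanePath S l ∧ l.head? = some s ∧ l.getLast? = some t ∧
      IsEdgeOf a b l := by
  rintro ⟨l, hpp, hhead, hlast, hedge⟩
  have swap_hp : ∀ u : Pt, (∃ p ∈ S, p ≠ u ∧ 0 < det3 a b p * det3 a b u) →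
      (∃ p ∈ S, p ≠ u ∧ 0 < det3 b a p * det3 b a u) := by
    rintro u ⟨p, h1, h2, h3⟩
    exact ⟨p, h1, h2, by rw [det3_swap a b p, det3_swap a b u, neg_mul_neg]; exact h3⟩
  have swap_hbr : ∀ u : Pt, (∀ x ∈ S, ∀ y ∈ S, IsBridge a b x y → x = u ∨ y = u) →
      (∀ x ∈ S, ∀ y ∈ S, IsBridge b a x y → x = u ∨ y = u) := by
    intro u h x hx y hy hbridge
    exact h x hx y hy (bridge_swap hbridge)
  have swap_hull : ¬ (HullVertex S b ∧ HullVertex S a) := fun h => hnothull ⟨h.2, h.1⟩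
  rcases hcase with ⟨hsab, hp, hbr⟩ | ⟨htab, hp, hbr⟩
  · simp only [Set.mem_insert_iff, Set.mem_singleton_iff] at hsab
    rcases hsab with rfl | rfl
    · exact main_lemma S hgp s b t ha hb hab ht hnothull hp hbr l hpp hhead hlast hedge
    · exact main_lemma S hgp s a t hb ha hab.symm ht swap_hull (swap_hp t hp)
        (swap_hbr t hbr) l hpp hhead hlast (Or.symm hedge)
  · have hpp' := planePath_reverse hpp
    have hhead' : l.reverse.head? = some t := by rw [List.head?_reverse]; exact hlast
    have hlast' : l.reverse.getLast? = some s := by rw [List.getLast?_reverse]; exact hhead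
    have hedge' := isEdgeOf_reverse hedge
    simp only [Set.mem_insert_iff, Set.mem_singleton_iff] at htab
    rcases htab with rfl | rfl
    · exact main_lemma S hgp t b s ha hb hab hs hnothull hp hbr l.reverse hpp'
        hhead' hlast' hedge'
    · exact main_lemma S hgp t a s hb ha hab.symm hs swap_hull (swap_hp s hp)
        (swap_hbr s hbr) l.reverse hpp' hhead' hlast' (Or.symm hedge')
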